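/- Let $M \ge 2$. Every subspace $L \subseteq \wedge^2 \mathbb{C}^M$ of codimension at most 2 is spanned by the decomposable 2-vectors it contains. -/

import Mathlib

open scoped InnerProductSpace

noncomputable section

/-- The `N`-fold tensor power of `ℂ^M`, realized as the Euclidean space with
orthonormal basis indexed by multi-indices `Fin N → Fin M`. -/
abbrev TensorPow (N M : ℕ) : Type := EuclideanSpace ℂ (Fin N → Fin M)

/-- The wedge (Slater determinant) of a family of `N` vectors in `ℂ^M`:
`|v 0⟩ ∧ ⋯ ∧ |v (N-1)⟩ = ∑ σ, sgn σ • |v σ(0), …, v σ(N-1)⟩`. -/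
def wedge {N M : ℕ} (v : Fin N → EuclideanSpace ℂ (Fin M)) : TensorPow N M :=
  WithLp.toLp 2 (fun x => ∑ σ : Equiv.Perm (Fin N), ((Equiv.Perm.sign σ : ℤ) : ℂ) * ∏ k, v (σ k) (x k))

/-- The exterior power `⋀^N ℂ^M`, i.e. the subspace of antisymmetric tensors
in `(ℂ^M)^{⊗N}`. -/
def exteriorPow (N M : ℕ) : Submodule ℂ (TensorPow N M) where
  carrier := {ψ | ∀ σ : Equiv.Perm (Fin N), ∀ x : Fin N → Fin M,
    ψ (x ∘ σ) = ((Equiv.Perm.sign σ : ℤ) : ℂ) * ψ x}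
  add_mem' := by
    intro a b ha hb σ x
    have h1 := ha σ x
    have h2 := hb σ x
    show a (x ∘ σ) + b (x ∘ σ) = ((Equiv.Perm.sign σ : ℤ) : ℂ) * (a x + b x)
    rw [h1, h2]; ring
  zero_mem' := by
    intro σ x
    show (0 : ℂ) = ((Equiv.Perm.sign σ : ℤ) : ℂ) * (0 : ℂ)
    ring
  smul_mem' := by
    intro c a ha σ x
    have h1 := ha σ x
    show c * a (x ∘ σ) = ((Equiv.Perm.sign σ : ℤ) : ℂ) * (c * a x)
    rw [h1]; ring

/-- A decomposable (Slater determinant) vector in `⋀^N ℂ^M`. -/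
def IsSlater {N M : ℕ} (ψ : TensorPow N M) : Prop :=
  ∃ v : Fin N → EuclideanSpace ℂ (Fin M), ψ = wedge v


namespace SlaterAux

variable {V : Type*} [AddCommGroup V] [Module ℂ V]

/-- Two functionals are linearly dependent. -/
def Dep2 (a b : V →ₗ[ℂ] ℂ) : Prop :=
  ∃ s t : ℂ, (s ≠ 0 ∨ t ≠ 0) ∧ ∀ w, s * a w + t * b w = 0

lemma k1 {a f : V →ₗ[ℂ] ℂ} (h : ∀ w, a w = 0 → f w = 0) :
    ∃ c : ℂ, ∀ w, f w = c * a w := by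
  by_cases ha : ∃ u, a u ≠ 0
  · obtain ⟨u, hu⟩ := ha
    refine ⟨f u / a u, fun w => ?_⟩
    have h0 : a (w - (a w / a u) • u) = 0 := by
      simp only [map_sub, map_smul, smul_eq_mul]
      field_simp
      ring
    have hf := h _ h0
    simp only [map_sub, map_smul, smul_eq_mul] at hf
    field_simp at hf ⊢
    linear_combination hf
  · push_neg at ha
    exact ⟨0, fun w => by rw [h w (ha w)]; ring⟩

lemma dual_pair {a b : V →ₗ[ℂ] ℂ} (h : ¬ Dep2 a b) :
    ∃ u1 u2 : V, a u1 = 1 ∧ b u1 = 0 ∧ a u2 = 0 ∧ b u2 = 1 := by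
  have h1 : ∃ u, b u = 0 ∧ a u ≠ 0 := by
    by_contra hc
    push_neg at hc
    obtain ⟨c, hcc⟩ := k1 (a := b) (f := a) hc
    exact h ⟨1, -c, Or.inl one_ne_zero, fun w => by rw [hcc w]; ring⟩
  have h2 : ∃ u, a u = 0 ∧ b u ≠ 0 := by
    by_contra hc
    push_neg at hc
    obtain ⟨c, hcc⟩ := k1 (a := a) (f := b) hc
    exact h ⟨c, -1, Or.inr (by norm_num), fun w => by rw [hcc w]; ring⟩
  obtain ⟨u, hub, hua⟩ := h1
  obtain ⟨v, hva, hvb⟩ := h2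
  refine ⟨(a u)⁻¹ • u, (b v)⁻¹ • v, ?_, ?_, ?_, ?_⟩ <;>
    simp only [map_smul, smul_eq_mul, hub, hva] <;> field_simp <;> simp

lemma ks {a b f : V →ₗ[ℂ] ℂ} (h : ∀ w, a w = 0 → b w = 0 → f w = 0) :
    ∃ α β : ℂ, ∀ w, f w = α * a w + β * b w := by
  by_cases hd : Dep2 a b
  · obtain ⟨s, t, hst, he⟩ := hd
    by_cases ht : t = 0
    · have hs : s ≠ 0 := hst.resolve_right (fun hh => hh ht)
      have ha0 : ∀ w, a w = 0 := fun w => by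
        have h' := he w; rw [ht] at h'
        have : s * a w = 0 := by linear_combination h'
        exact (mul_eq_zero.mp this).resolve_left hs
      obtain ⟨c, hc⟩ := k1 (a := b) (f := f) (fun w hw => h w (ha0 w) hw)
      exact ⟨0, c, fun w => by rw [hc w]; ring⟩
    · have hb : ∀ w, b w = -(s/t) * a w := fun w => by
        have := he w; field_simp; linear_combination this
      obtain ⟨c, hc⟩ := k1 (a := a) (f := f)
        (fun w hw => h w hw (by rw [hb w, hw]; ring))
      exact ⟨c, 0, fun w => by rw [hc w]; ring⟩
  · obtain ⟨u1, u2, ha1, hb1, ha2, hb2⟩ := dual_pair hd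
    refine ⟨f u1, f u2, fun w => ?_⟩
    have h0 : f (w - a w • u1 - b w • u2) = 0 := by
      apply h <;> simp [map_sub, map_smul, ha1, hb1, ha2, hb2]
    simp only [map_sub, map_smul, smul_eq_mul] at h0
    linear_combination h0


/-- antisymmetry from alternating -/
lemma anti {B : V →ₗ[ℂ] V →ₗ[ℂ] ℂ} (hB : ∀ v, B v v = 0) (v w : V) :
    B w v = -B v w := by
  have h := hB (v + w)
  simp only [map_add, LinearMap.add_apply, hB v, hB w] at h
  linear_combination h

lemma lemC {B C : V →ₗ[ℂ] V →ₗ[ℂ] ℂ} (hB : ∀ v, B v v = 0)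
    (h : ∀ v w w', B v w * C v w' = B v w' * C v w) :
    ∃ s t : ℂ, (s ≠ 0 ∨ t ≠ 0) ∧ ∀ v w, s * B v w + t * C v w = 0 := by
  by_cases hB0 : ∀ v w, B v w = 0
  · exact ⟨1, 0, Or.inl one_ne_zero, fun v w => by rw [hB0 v w]; ring⟩
  push_neg at hB0
  obtain ⟨v1, w1, hv1⟩ := hB0
  -- pointwise proportionality where B v ≠ 0
  have hpt : ∀ v w0, B v w0 ≠ 0 → ∀ w, C v w = (C v w0 / B v w0) * B v w := by
    intro v w0 hw0 w
    have := h v w0 w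
    field_simp
    linear_combination this
  -- rank ≥ 2 : there is v2 with ¬ Dep2 (B v1) (B v2)
  have hrk : ∃ v2, ¬ Dep2 (B v1) (B v2) := by
    by_contra hc
    push_neg at hc
    have hprop : ∀ v, ∃ κ : ℂ, ∀ w, B v w = κ * B v1 w := by
      intro v
      obtain ⟨s, t, hst, he⟩ := hc v
      by_cases ht : t = 0
      · exfalso
        have hs : s ≠ 0 := hst.resolve_right (fun hh => hh ht)
        have := he w1; rw [ht] at this
        have : s * B v1 w1 = 0 := by linear_combination this
        exact hv1 ((mul_eq_zero.mp this).resolve_left hs)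
      · refine ⟨-s/t, fun w => ?_⟩
        have := he w
        field_simp
        linear_combination this
    choose κ hκ using hprop
    have hκval : ∀ v, κ v * B v1 w1 = -(κ w1) * B v1 v := by
      intro v
      have h1 : B v w1 = κ v * B v1 w1 := hκ v w1
      have h2 : B w1 v = κ w1 * B v1 v := hκ w1 v
      have h3 : B w1 v = -B v w1 := anti hB v w1
      linear_combination h3 - h1 - h2
    have hdiag : ∀ v, κ v * B v1 v = 0 := by
      intro v
      have := hκ v v
      rw [hB v] at this
      linear_combination -this
    have hκw1 : κ w1 = 0 := by
      have h1 := hκval w1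
      have h2 : (2 : ℂ) * (κ w1 * B v1 w1) = 0 := by linear_combination h1
      have h3 : κ w1 * B v1 w1 = 0 := by
        linear_combination h2 / 2
      exact (mul_eq_zero.mp h3).resolve_right hv1
    have hκ0 : ∀ v, κ v = 0 := by
      intro v
      have := hκval v
      rw [hκw1] at this
      have h4 : κ v * B v1 w1 = 0 := by linear_combination this
      exact (mul_eq_zero.mp h4).resolve_right hv1
    have : B v1 w1 = 0 := by rw [hκ v1 w1, hκ0 v1]; ring
    exact hv1 this
  obtain ⟨v2, hv2⟩ := hrk
  have hw2 : ∃ w2, B v2 w2 ≠ 0 := by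
    by_contra hc
    push_neg at hc
    exact hv2 ⟨0, 1, Or.inr one_ne_zero, fun w => by rw [hc w]; ring⟩
  obtain ⟨w2, hw2⟩ := hw2
  set c1 := C v1 w1 / B v1 w1 with hc1def
  set c2 := C v2 w2 / B v2 w2 with hc2def
  have hC1 : ∀ w, C v1 w = c1 * B v1 w := hpt v1 w1 hv1
  have hC2 : ∀ w, C v2 w = c2 * B v2 w := hpt v2 w2 hw2
  have subc : ∀ u u' (cu cu' : ℂ), (∀ w, C u w = cu * B u w) →
      (∀ w, C u' w = cu' * B u' w) → ¬ Dep2 (B u) (B u') → cu = cu' := by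
    intro u u' cu cu' hcu hcu' hind
    have hsum : ∃ ws, B u ws + B u' ws ≠ 0 := by
      by_contra hc
      push_neg at hc
      exact hind ⟨1, 1, Or.inl one_ne_zero, fun w => by linear_combination hc w⟩
    obtain ⟨ws, hws⟩ := hsum
    have hBuu' : B (u + u') ws ≠ 0 := by
      simpa only [map_add, LinearMap.add_apply] using hws
    have h12 := hpt (u + u') ws hBuu'
    set c'' := C (u + u') ws / B (u + u') ws with hc''def
    have hkey : ∀ w, (cu - c'') * B u w + (cu' - c'') * B u' w = 0 := by
      intro w
      have h3 := h12 w
      simp only [map_add, LinearMap.add_apply] at h3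
      rw [hcu w, hcu' w] at h3
      linear_combination h3
    have hz : cu - c'' = 0 ∧ cu' - c'' = 0 := by
      by_contra hc
      exact hind ⟨cu - c'', cu' - c'', not_and_or.mp hc, hkey⟩
    have e1 := sub_eq_zero.mp hz.1
    have e2 := sub_eq_zero.mp hz.2
    rw [e1, e2]
  have dep2_symm : ∀ {p q : V →ₗ[ℂ] ℂ}, Dep2 p q → Dep2 q p := by
    rintro p q ⟨s, t, hst, he⟩
    exact ⟨t, s, hst.symm, fun w => by linear_combination he w⟩
  have main_claim : ∀ v (c : ℂ), (∀ w, C v w = c * B v w) → (∃ w, B v w ≠ 0) → c = c1 := by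
    rintro v c hcv ⟨wv, hwv⟩
    by_cases hdep : Dep2 (B v1) (B v)
    · obtain ⟨s, t, hst, he⟩ := hdep
      have ht : t ≠ 0 := by
        intro ht0
        have hs := hst.resolve_right (fun hh => hh ht0)
        have h' := he w1
        rw [ht0] at h'
        have : s * B v1 w1 = 0 := by linear_combination h'
        exact hv1 ((mul_eq_zero.mp this).resolve_left hs)
      have hs : s ≠ 0 := by
        intro hs0
        have h' := he wv
        rw [hs0] at h'
        have : t * B v wv = 0 := by linear_combination h'
        exact hwv ((mul_eq_zero.mp this).resolve_left ht)
      have hBv : ∀ w, B v w = (-s/t) * B v1 w := by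
        intro w
        have h' := he w
        field_simp
        linear_combination h'
      have hnd : ¬ Dep2 (B v) (B v2) := by
        rintro ⟨p, q, hpq, hpe⟩
        apply hv2
        refine ⟨p * (-s/t), q, ?_, fun w => ?_⟩
        · rcases hpq with hp | hq
          · exact Or.inl (mul_ne_zero hp (div_ne_zero (neg_ne_zero.mpr hs) ht))
          · exact Or.inr hq
        · have h' := hpe w
          rw [hBv w] at h'
          linear_combination h'
      have hcc2 : c = c2 := subc v v2 c c2 hcv hC2 hnd
      have h12 : c1 = c2 := subc v1 v2 c1 c2 hC1 hC2 hv2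
      rw [hcc2, h12]
    · exact subc v v1 c c1 hcv hC1 (fun hd => hdep (dep2_symm hd))
  refine ⟨c1, -1, Or.inr (by norm_num), fun v w => ?_⟩
  by_cases hv : ∃ w0, B v w0 ≠ 0
  · obtain ⟨w0, hw0⟩ := hv
    have hcv := hpt v w0 hw0
    have hcc := main_claim v _ hcv ⟨w0, hw0⟩
    have := hcv w
    rw [hcc] at this
    linear_combination -this
  · push_neg at hv
    have hBvv1 : B (v + v1) w1 ≠ 0 := by
      simp only [map_add, LinearMap.add_apply, hv w1, zero_add]
      exact hv1
    have hc' := hpt (v + v1) w1 hBvv1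
    have hce := main_claim (v + v1) _ hc' ⟨w1, hBvv1⟩
    have h5 := hc' w
    rw [hce] at h5
    simp only [map_add, LinearMap.add_apply] at h5
    have h6 := hC1 w
    have h7 : C v w = 0 := by
      rw [hv w] at h5
      linear_combination h5 - h6
    rw [hv w, h7]
    ring


def det3 (p q r : V → ℂ) (u x y : V) : ℂ :=
  p u * (q x * r y - q y * r x) - p x * (q u * r y - q y * r u) + p y * (q u * r x - q x * r u)

lemma lemE {G H F : V →ₗ[ℂ] V →ₗ[ℂ] ℂ} (hGa : ∀ v, G v v = 0) (hHa : ∀ v, H v v = 0)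
    (hFa : ∀ v, F v v = 0)
    (hD1 : ∀ v, ∃ p q : ℂ, ∀ w, F v w = p * G v w + q * H v w)
    {v0 : V} (hv0 : ¬ Dep2 (G v0) (H v0)) :
    ∃ α β γ : ℂ, ∀ v w,
      F v w = α * G v w + β * H v w + γ * (G v0 v * H v0 w - G v0 w * H v0 v) := by
  obtain ⟨α, β, hαβ⟩ := hD1 v0
  set F1 : V →ₗ[ℂ] V →ₗ[ℂ] ℂ := F - α • G - β • H with hF1def
  have hF1 : ∀ v w, F1 v w = F v w - α * G v w - β * H v w := by
    intro v w
    simp [hF1def, LinearMap.sub_apply, LinearMap.smul_apply, smul_eq_mul]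
  have hF1v0 : ∀ w, F1 v0 w = 0 := fun w => by rw [hF1, hαβ w]; ring
  have hF1alt : ∀ v, F1 v v = 0 := fun v => by rw [hF1, hGa, hHa, hFa]; ring
  have hD1' : ∀ v, ∃ p q : ℂ, ∀ w, F1 v w = p * G v w + q * H v w := by
    intro v
    obtain ⟨p, q, hpq⟩ := hD1 v
    exact ⟨p - α, q - β, fun w => by rw [hF1, hpq w]; ring⟩
  obtain ⟨u1, u2, ha1, hb1, ha2, hb2⟩ := dual_pair hv0
  have key : ∀ v w, F1 v w = F1 v u1 * G v0 w + F1 v u2 * H v0 w := by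
    intro v w
    have inst : ∀ t : ℂ, t ≠ 0 → ∃ p q : ℂ, ∀ y,
        F1 v y = p * (G v0 y + t * G v y) + q * (H v0 y + t * H v y) := by
      intro t ht
      obtain ⟨p, q, hpq⟩ := hD1' (v0 + t • v)
      refine ⟨p / t, q / t, fun y => ?_⟩
      have h1 := hpq y
      have h2 : F1 (v0 + t • v) y = t * F1 v y := by
        simp only [map_add, map_smul, LinearMap.add_apply, LinearMap.smul_apply,
          smul_eq_mul, hF1v0]
        ring
      have h3 : G (v0 + t • v) y = G v0 y + t * G v y := by
        simp only [map_add, map_smul, LinearMap.add_apply, LinearMap.smul_apply, smul_eq_mul]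
      have h4 : H (v0 + t • v) y = H v0 y + t * H v y := by
        simp only [map_add, map_smul, LinearMap.add_apply, LinearMap.smul_apply, smul_eq_mul]
      rw [h2, h3, h4] at h1
      field_simp
      linear_combination h1
    obtain ⟨p1, q1, he1⟩ := inst 1 one_ne_zero
    obtain ⟨p2, q2, he2⟩ := inst 2 (by norm_num)
    obtain ⟨p3, q3, he3⟩ := inst 3 (by norm_num)
    have hdet : ∀ (t p q : ℂ),
        (∀ y, F1 v y = p * (G v0 y + t * G v y) + q * (H v0 y + t * H v y)) →
        det3 (fun y => F1 v y) (fun y => G v0 y + t * G v y)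
          (fun y => H v0 y + t * H v y) w u1 u2 = 0 := by
      intro t p q hpq
      simp only [det3]
      rw [hpq w, hpq u1, hpq u2]
      ring
    have d1 := hdet 1 p1 q1 he1
    have d2 := hdet 2 p2 q2 he2
    have d3 := hdet 3 p3 q3 he3
    simp only [det3] at d1 d2 d3
    have d0 : F1 v w * (G v0 u1 * H v0 u2 - G v0 u2 * H v0 u1)
        - F1 v u1 * (G v0 w * H v0 u2 - G v0 u2 * H v0 w)
        + F1 v u2 * (G v0 w * H v0 u1 - G v0 u1 * H v0 w) = 0 := by
      linear_combination 3 * d1 - 3 * d2 + d3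
    rw [ha1, hb1, ha2, hb2] at d0
    linear_combination d0
  have hanti : ∀ v w, F1 w v = -F1 v w := fun v w => anti hF1alt v w
  set γ := F1 u2 u1 with hγ
  have hu12 : F1 u1 u2 = -γ := hanti u2 u1
  have h1a : ∀ v, F1 v u1 = γ * H v0 v := by
    intro v
    have h := key u1 v
    have h3 := hanti u1 v
    rw [h3, h, hF1alt u1, hu12]
    ring
  have h2a : ∀ v, F1 v u2 = -γ * G v0 v := by
    intro v
    have h := key u2 v
    have h3 := hanti u2 v
    rw [h3, h, hF1alt u2]
    ring
  refine ⟨α, β, -γ, fun v w => ?_⟩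
  have hk := key v w
  rw [h1a v, h2a v, hF1] at hk
  linear_combination hk


lemma lemSingle {G F : V →ₗ[ℂ] V →ₗ[ℂ] ℂ} (hGa : ∀ v, G v v = 0)
    (hyp : ∀ v w, G v w = 0 → F v w = 0) :
    ∃ c : ℂ, ∀ v w, F v w = c * G v w := by
  have hpt : ∀ v, ∃ c : ℂ, ∀ w, F v w = c * G v w := fun v =>
    k1 (fun w hw => hyp v w hw)
  choose c hc using hpt
  have hdet : ∀ v w w', G v w * F v w' = G v w' * F v w := by
    intro v w w'
    rw [hc v w, hc v w']
    ring
  obtain ⟨s, t, hst, he⟩ := lemC hGa hdet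
  by_cases ht : t = 0
  · have hs : s ≠ 0 := hst.resolve_right (fun hh => hh ht)
    have hG0 : ∀ v w, G v w = 0 := by
      intro v w
      have h' := he v w
      rw [ht] at h'
      have : s * G v w = 0 := by linear_combination h'
      exact (mul_eq_zero.mp this).resolve_left hs
    exact ⟨0, fun v w => by rw [hyp v w (hG0 v w)]; ring⟩
  · refine ⟨-s/t, fun v w => ?_⟩
    have h' := he v w
    field_simp
    linear_combination h'

theorem mainLemma {G H F : V →ₗ[ℂ] V →ₗ[ℂ] ℂ} (hGa : ∀ v, G v v = 0)
    (hHa : ∀ v, H v v = 0) (hFa : ∀ v, F v v = 0)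
    (hyp : ∀ v w, G v w = 0 → H v w = 0 → F v w = 0) :
    ∃ α β : ℂ, ∀ v w, F v w = α * G v w + β * H v w := by
  have hD1 : ∀ v, ∃ p q : ℂ, ∀ w, F v w = p * G v w + q * H v w :=
    fun v => ks (fun w h1 h2 => hyp v w h1 h2)
  by_cases hdep : ∃ s t : ℂ, (s ≠ 0 ∨ t ≠ 0) ∧ ∀ v w, s * G v w + t * H v w = 0
  · obtain ⟨s, t, hst, he⟩ := hdep
    by_cases ht : t = 0
    · have hs : s ≠ 0 := hst.resolve_right (fun hh => hh ht)
      have hG0 : ∀ v w, G v w = 0 := by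
        intro v w
        have h' := he v w
        rw [ht] at h'
        have : s * G v w = 0 := by linear_combination h'
        exact (mul_eq_zero.mp this).resolve_left hs
      obtain ⟨c, hc⟩ := lemSingle hHa (fun v w hw => hyp v w (hG0 v w) hw)
      exact ⟨0, c, fun v w => by rw [hc v w]; ring⟩
    · have hH : ∀ v w, H v w = (-s/t) * G v w := by
        intro v w
        have h' := he v w
        field_simp
        linear_combination h'
      obtain ⟨c, hc⟩ := lemSingle hGa
        (fun v w hw => hyp v w hw (by rw [hH v w, hw]; ring))
      exact ⟨c, 0, fun v w => by rw [hc v w]; ring⟩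
  · have hv0ex : ∃ v0, ¬ Dep2 (G v0) (H v0) := by
      by_contra hc
      push_neg at hc
      have hdet : ∀ v w w', G v w * H v w' = G v w' * H v w := by
        intro v w w'
        obtain ⟨s, t, hst, he⟩ := hc v
        by_cases ht : t = 0
        · have hs : s ≠ 0 := hst.resolve_right (fun hh => hh ht)
          have hg : ∀ y, G v y = 0 := by
            intro y
            have h' := he y
            rw [ht] at h'
            have : s * G v y = 0 := by linear_combination h'
            exact (mul_eq_zero.mp this).resolve_left hs
          rw [hg w, hg w']
          ring
        · have hh : ∀ y, H v y = (-s/t) * G v y := by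
            intro y
            have h' := he y
            field_simp
            linear_combination h'
          rw [hh w, hh w']
          ring
      obtain ⟨s, t, hst, he⟩ := lemC hGa hdet
      exact hdep ⟨s, t, hst, he⟩
    obtain ⟨v0, hv0⟩ := hv0ex
    obtain ⟨α, β, γ, hE⟩ := lemE hGa hHa hFa hD1 hv0
    by_cases hγ : γ = 0
    · refine ⟨α, β, fun v w => ?_⟩
      have h' := hE v w
      rw [hγ] at h'
      linear_combination h'
    suffices hKs : ∃ l m : ℂ, ∀ x y,
        G v0 x * H v0 y - G v0 y * H v0 x = l * G x y + m * H x y by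
      obtain ⟨l, m, hlm⟩ := hKs
      refine ⟨α + γ * l, β + γ * m, fun v w => ?_⟩
      have h1 := hE v w
      have h2 := hlm v w
      linear_combination h1 + γ * h2
    by_contra hK
    obtain ⟨u1, u2, ha1, hb1, ha2, hb2⟩ := dual_pair hv0
    have hFnot : ¬ ∃ p q : ℂ, ∀ v w, F v w = p * G v w + q * H v w := by
      rintro ⟨p, q, hpq⟩
      apply hK
      refine ⟨(p - α)/γ, (q - β)/γ, fun x y => ?_⟩
      have h1 := hE x y
      have h2 := hpq x y
      field_simp
      linear_combination h2 - h1
    have D3 : ∀ v, ∃ l m n : ℂ, ∀ x y,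
        G v x * H v y - G v y * H v x
          = l * G x y + m * H x y + n * (G v0 x * H v0 y - G v0 y * H v0 x) := by
      intro v
      by_cases hdv : Dep2 (G v) (H v)
      · refine ⟨0, 0, 0, fun x y => ?_⟩
        obtain ⟨s, t, hst, he⟩ := hdv
        by_cases ht : t = 0
        · have hs : s ≠ 0 := hst.resolve_right (fun hh => hh ht)
          have hg : ∀ y, G v y = 0 := by
            intro y
            have h' := he y
            rw [ht] at h'
            have : s * G v y = 0 := by linear_combination h'
            exact (mul_eq_zero.mp this).resolve_left hs
          rw [hg x, hg y]
          ring
        · have hh : ∀ y, H v y = (-s/t) * G v y := by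
            intro y
            have h' := he y
            field_simp
            linear_combination h'
          rw [hh x, hh y]
          ring
      · obtain ⟨α', β', γ', hE'⟩ := lemE hGa hHa hFa hD1 hdv
        have hγ' : γ' ≠ 0 := by
          intro h0
          apply hFnot
          refine ⟨α', β', fun x y => ?_⟩
          have h' := hE' x y
          rw [h0] at h'
          linear_combination h'
        refine ⟨(α - α')/γ', (β - β')/γ', γ/γ', fun x y => ?_⟩
        have h1 := hE x y
        have h2 := hE' x y
        field_simp
        linear_combination h1 - h2
    have E3 : ∀ v, ∃ l m : ℂ, ∀ y,
        H v0 v * G v y - G v0 v * H v y = l * G v0 y + m * H v0 y := by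
      intro v
      obtain ⟨l, m, n, hd⟩ := D3 v
      refine ⟨l, m, fun y => ?_⟩
      have h1 := hd v0 y
      rw [anti hGa v0 v, anti hHa v0 v, hGa v0, hHa v0] at h1
      linear_combination h1
    have hGspan : ∀ v, G v0 v = 0 → H v0 v = 1 →
        ∃ l m : ℂ, ∀ y, G v y = l * G v0 y + m * H v0 y := by
      intro v hav hbv
      obtain ⟨l, m, he3⟩ := E3 v
      refine ⟨l, m, fun y => ?_⟩
      have h' := he3 y
      rw [hav, hbv] at h'
      linear_combination h'
    have hHspan : ∀ v, G v0 v = 1 → H v0 v = 0 →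
        ∃ l m : ℂ, ∀ y, H v y = l * G v0 y + m * H v0 y := by
      intro v hav hbv
      obtain ⟨l, m, he3⟩ := E3 v
      refine ⟨-l, -m, fun y => ?_⟩
      have h' := he3 y
      rw [hav, hbv] at h'
      linear_combination -h'
    have hGA : ∀ x y, G v0 x = 0 → H v0 x = 0 → G v0 y = 0 → H v0 y = 0 →
        G x y = 0 := by
      intro x y hax hbx hay hby
      obtain ⟨l, m, hu⟩ := hGspan (x + u2)
        (by simp only [map_add, hax, ha2, add_zero])
        (by simp only [map_add, hbx, hb2, zero_add])
      obtain ⟨l', m', hu'⟩ := hGspan u2 ha2 hb2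
      have h1 := hu y
      have h2 := hu' y
      have h3 : G (x + u2) y = G x y + G u2 y := by
        simp only [map_add, LinearMap.add_apply]
      rw [h3, hay, hby] at h1
      rw [hay, hby] at h2
      linear_combination h1 - h2
    have hHA : ∀ x y, G v0 x = 0 → H v0 x = 0 → G v0 y = 0 → H v0 y = 0 →
        H x y = 0 := by
      intro x y hax hbx hay hby
      obtain ⟨l, m, hu⟩ := hHspan (x + u1)
        (by simp only [map_add, hax, ha1, zero_add])
        (by simp only [map_add, hbx, hb1, add_zero])
      obtain ⟨l', m', hu'⟩ := hHspan u1 ha1 hb1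
      have h1 := hu y
      have h2 := hu' y
      have h3 : H (x + u1) y = H x y + H u1 y := by
        simp only [map_add, LinearMap.add_apply]
      rw [h3, hay, hby] at h1
      rw [hay, hby] at h2
      linear_combination h1 - h2
    -- the subspace A and the two functionals on A × A
    set A : Submodule ℂ V := LinearMap.ker (G v0) ⊓ LinearMap.ker (H v0) with hA
    have memA : ∀ z : V, z ∈ A ↔ (G v0 z = 0 ∧ H v0 z = 0) := by
      intro z
      simp [hA, Submodule.mem_inf, LinearMap.mem_ker]
    set φg : (↥A × ↥A) →ₗ[ℂ] ℂ :=
      ((G u1).comp A.subtype).comp (LinearMap.fst ℂ ↥A ↥A)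
        - ((G u2).comp A.subtype).comp (LinearMap.snd ℂ ↥A ↥A) with hφgdef
    set φh : (↥A × ↥A) →ₗ[ℂ] ℂ :=
      ((H u1).comp A.subtype).comp (LinearMap.fst ℂ ↥A ↥A)
        - ((H u2).comp A.subtype).comp (LinearMap.snd ℂ ↥A ↥A) with hφhdef
    have hφg : ∀ z : ↥A × ↥A, φg z = G u1 ↑z.1 - G u2 ↑z.2 := by
      intro z
      simp [hφgdef]
    have hφh : ∀ z : ↥A × ↥A, φh z = H u1 ↑z.1 - H u2 ↑z.2 := by
      intro z
      simp [hφhdef]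
    by_cases hsys : Dep2 φg φh
    · obtain ⟨s, t, hst, he⟩ := hsys
      have hA1 : ∀ z : V, G v0 z = 0 → H v0 z = 0 →
          s * G u1 z + t * H u1 z = 0 := by
        intro z hz1 hz2
        have hm : z ∈ A := (memA z).mpr ⟨hz1, hz2⟩
        have h' := he (⟨z, hm⟩, 0)
        rw [hφg, hφh] at h'
        simp only [Submodule.coe_zero, map_zero] at h'
        linear_combination h'
      have hA2 : ∀ z : V, G v0 z = 0 → H v0 z = 0 →
          s * G u2 z + t * H u2 z = 0 := by
        intro z hz1 hz2
        have hm : z ∈ A := (memA z).mpr ⟨hz1, hz2⟩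
        have h' := he (0, ⟨z, hm⟩)
        rw [hφg, hφh] at h'
        simp only [Submodule.coe_zero, map_zero] at h'
        linear_combination -h'
      have hM : ∀ v w, s * G v w + t * H v w
          = (s * G u1 u2 + t * H u1 u2) * (G v0 v * H v0 w - G v0 w * H v0 v) := by
        intro v w
        set zv := v - G v0 v • u1 - H v0 v • u2 with hzv
        set zw := w - G v0 w • u1 - H v0 w • u2 with hzw
        have hzva : G v0 zv = 0 := by
          simp only [hzv, map_sub, map_smul, smul_eq_mul, ha1, hb1, ha2, hb2]
          ring
        have hzvb : H v0 zv = 0 := by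
          simp only [hzv, map_sub, map_smul, smul_eq_mul, ha1, hb1, ha2, hb2]
          ring
        have hzwa : G v0 zw = 0 := by
          simp only [hzw, map_sub, map_smul, smul_eq_mul, ha1, hb1, ha2, hb2]
          ring
        have hzwb : H v0 zw = 0 := by
          simp only [hzw, map_sub, map_smul, smul_eq_mul, ha1, hb1, ha2, hb2]
          ring
        have hv' : v = G v0 v • u1 + H v0 v • u2 + zv := by
          rw [hzv]; abel
        have hw' : w = G v0 w • u1 + H v0 w • u2 + zw := by
          rw [hzw]; abel
        have expand : ∀ P : V →ₗ[ℂ] V →ₗ[ℂ] ℂ, P v w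
            = G v0 v * G v0 w * P u1 u1 + G v0 v * H v0 w * P u1 u2
              + G v0 v * P u1 zw + H v0 v * G v0 w * P u2 u1
              + H v0 v * H v0 w * P u2 u2 + H v0 v * P u2 zw
              + G v0 w * P zv u1 + H v0 w * P zv u2 + P zv zw := by
          intro P
          conv_lhs => rw [hv', hw']
          simp only [map_add, map_smul, LinearMap.add_apply, LinearMap.smul_apply,
            smul_eq_mul]
          ring
        have eG := expand G
        have eH := expand H
        have f1 := hA1 zw hzwa hzwb
        have f2 := hA2 zw hzwa hzwb
        have f3 : s * G zv u1 + t * H zv u1 = 0 := by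
          have h' := hA1 zv hzva hzvb
          rw [anti hGa u1 zv, anti hHa u1 zv]
          linear_combination -h'
        have f4 : s * G zv u2 + t * H zv u2 = 0 := by
          have h' := hA2 zv hzva hzvb
          rw [anti hGa u2 zv, anti hHa u2 zv]
          linear_combination -h'
        have f5g := hGA zv zw hzva hzvb hzwa hzwb
        have f5h := hHA zv zw hzva hzvb hzwa hzwb
        rw [eG, eH, hGa u1, hGa u2, hHa u1, hHa u2, anti hGa u1 u2, anti hHa u1 u2,
          f5g, f5h]
        linear_combination G v0 v * f1 + H v0 v * f2 + G v0 w * f3 + H v0 w * f4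
      by_cases hκ : s * G u1 u2 + t * H u1 u2 = 0
      · apply hdep
        refine ⟨s, t, hst, fun v w => ?_⟩
        have h' := hM v w
        rw [hκ] at h'
        linear_combination h'
      · apply hK
        refine ⟨s / (s * G u1 u2 + t * H u1 u2), t / (s * G u1 u2 + t * H u1 u2),
          fun x y => ?_⟩
        have h' := hM x y
        field_simp
        linear_combination -h'
    · obtain ⟨P1, P2, hg1, hh1, hg2, hh2⟩ := dual_pair hsys
      set p : ↥A × ↥A := (-(G u1 u2)) • P1 + (-(H u1 u2)) • P2 with hp
      have hpg : φg p = -(G u1 u2) := by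
        simp only [hp, map_add, map_smul, smul_eq_mul, hg1, hg2]
        ring
      have hph : φh p = -(H u1 u2) := by
        simp only [hp, map_add, map_smul, smul_eq_mul, hh1, hh2]
        ring
      rw [hφg p] at hpg
      rw [hφh p] at hph
      obtain ⟨hz1a, hz1b⟩ := (memA _).mp p.1.2
      obtain ⟨hz2a, hz2b⟩ := (memA _).mp p.2.2
      -- v := u1 + p.2, w := u2 + p.1
      have hGvw : G (u1 + ↑p.2) (u2 + ↑p.1) = 0 := by
        simp only [map_add, LinearMap.add_apply]
        rw [anti hGa u2 p.2, hGA _ _ hz2a hz2b hz1a hz1b]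
        linear_combination hpg
      have hHvw : H (u1 + ↑p.2) (u2 + ↑p.1) = 0 := by
        simp only [map_add, LinearMap.add_apply]
        rw [anti hHa u2 p.2, hHA _ _ hz2a hz2b hz1a hz1b]
        linear_combination hph
      have hF0 := hyp _ _ hGvw hHvw
      have hEvw := hE (u1 + ↑p.2) (u2 + ↑p.1)
      rw [hF0, hGvw, hHvw] at hEvw
      have e1 : G v0 (u1 + ↑p.2) = 1 := by
        simp only [map_add, ha1, hz2a, add_zero]
      have e2 : H v0 (u1 + ↑p.2) = 0 := by
        simp only [map_add, hb1, hz2b, add_zero]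
      have e3 : G v0 (u2 + ↑p.1) = 0 := by
        simp only [map_add, ha2, hz1a, add_zero]
      have e4 : H v0 (u2 + ↑p.1) = 1 := by
        simp only [map_add, hb2, hz1b, add_zero]
      rw [e1, e2, e3, e4] at hEvw
      apply hγ
      linear_combination -hEvw

end SlaterAux

namespace SlaterConc

variable {M : ℕ}

local notation "V" => EuclideanSpace ℂ (Fin M)
local notation "W" => TensorPow 2 M

lemma perm_fin2 : ∀ σ : Equiv.Perm (Fin 2), σ = 1 ∨ σ = Equiv.swap 0 1 := by decide

lemma univ_perm2 : (Finset.univ : Finset (Equiv.Perm (Fin 2))) = {1, Equiv.swap 0 1} := by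
  decide

lemma wedge_apply (u : Fin 2 → V) (x : Fin 2 → Fin M) :
    wedge u x = u 0 (x 0) * u 1 (x 1) - u 1 (x 0) * u 0 (x 1) := by
  show (∑ σ : Equiv.Perm (Fin 2), ((Equiv.Perm.sign σ : ℤ) : ℂ) * ∏ k, u (σ k) (x k)) = _
  rw [univ_perm2, Finset.sum_insert (by decide), Finset.sum_singleton]
  simp only [Equiv.Perm.sign_one, Equiv.Perm.sign_swap (by decide : (0 : Fin 2) ≠ 1),
    Fin.prod_univ_two, Equiv.Perm.one_apply, Equiv.swap_apply_left, Equiv.swap_apply_right]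
  push_cast
  ring

lemma wedge_pair_apply (v w : V) (x : Fin 2 → Fin M) :
    wedge ![v, w] x = v (x 0) * w (x 1) - w (x 0) * v (x 1) := by
  rw [wedge_apply]
  simp

lemma wedge_mem (v w : V) : wedge ![v, w] ∈ exteriorPow 2 M := by
  intro σ x
  rcases perm_fin2 σ with h | h <;> subst h
  · have hx : x ∘ ⇑(1 : Equiv.Perm (Fin 2)) = x := by
      funext k; simp
    rw [hx]
    simp
  · rw [wedge_pair_apply, wedge_pair_apply]
    have h0 : (x ∘ ⇑(Equiv.swap (0 : Fin 2) 1)) 0 = x 1 := by simp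
    have h1 : (x ∘ ⇑(Equiv.swap (0 : Fin 2) 1)) 1 = x 0 := by simp
    rw [h0, h1, Equiv.Perm.sign_swap (by decide : (0 : Fin 2) ≠ 1)]
    push_cast
    ring


lemma wedge_vv (v : V) : wedge ![v, v] = (0 : W) := by
  refine PiLp.ext (fun x => ?_)
  rw [wedge_pair_apply]
  show v (x 0) * v (x 1) - v (x 0) * v (x 1) = (0 : ℂ)
  ring

lemma wedge_add_left (v v' w : V) :
    wedge ![v + v', w] = wedge ![v, w] + wedge ![v', w] := by
  refine PiLp.ext (fun x => ?_)
  show wedge ![v + v', w] x = wedge ![v, w] x + wedge ![v', w] x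
  rw [wedge_pair_apply, wedge_pair_apply, wedge_pair_apply]
  show (v (x 0) + v' (x 0)) * w (x 1) - w (x 0) * (v (x 1) + v' (x 1)) = _
  ring

lemma wedge_smul_left (c : ℂ) (v w : V) :
    wedge ![c • v, w] = c • wedge ![v, w] := by
  refine PiLp.ext (fun x => ?_)
  show wedge ![c • v, w] x = c * wedge ![v, w] x
  rw [wedge_pair_apply, wedge_pair_apply]
  show (c * v (x 0)) * w (x 1) - w (x 0) * (c * v (x 1)) = _
  ring

lemma wedge_add_right (v w w' : V) :
    wedge ![v, w + w'] = wedge ![v, w] + wedge ![v, w'] := by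
  refine PiLp.ext (fun x => ?_)
  show wedge ![v, w + w'] x = wedge ![v, w] x + wedge ![v, w'] x
  rw [wedge_pair_apply, wedge_pair_apply, wedge_pair_apply]
  show v (x 0) * (w (x 1) + w' (x 1)) - (w (x 0) + w' (x 0)) * v (x 1) = _
  ring

lemma wedge_smul_right (c : ℂ) (v w : V) :
    wedge ![v, c • w] = c • wedge ![v, w] := by
  refine PiLp.ext (fun x => ?_)
  show wedge ![v, c • w] x = c * wedge ![v, w] x
  rw [wedge_pair_apply, wedge_pair_apply]
  show v (x 0) * (c * w (x 1)) - (c * w (x 0)) * v (x 1) = _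
  ring

/-- the bilinear form attached to a functional on tensor space -/
def Bform (g : W →ₗ[ℂ] ℂ) : EuclideanSpace ℂ (Fin M) →ₗ[ℂ] EuclideanSpace ℂ (Fin M) →ₗ[ℂ] ℂ :=
  LinearMap.mk₂ ℂ (fun v w => g (wedge ![v, w]))
    (fun v v' w => by rw [wedge_add_left, map_add])
    (fun c v w => by rw [wedge_smul_left, map_smul, smul_eq_mul])
    (fun v w w' => by rw [wedge_add_right, map_add])
    (fun c v w => by rw [wedge_smul_right, map_smul, smul_eq_mul])

lemma Bform_apply (g : W →ₗ[ℂ] ℂ) (v w : V) :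
    Bform g v w = g (wedge ![v, w]) := rfl

lemma Bform_alt (g : W →ₗ[ℂ] ℂ) (v : V) : Bform g v v = 0 := by
  rw [Bform_apply, wedge_vv, map_zero]


lemma matrix_eta (x : Fin 2 → Fin M) : x = ![x 0, x 1] := by
  funext i
  fin_cases i <;> rfl

lemma ext_antisym {ψ : W} (hψ : ψ ∈ exteriorPow 2 M) (i j : Fin M) :
    ψ ![j, i] = -ψ ![i, j] := by
  have h := hψ (Equiv.swap 0 1) ![i, j]
  have hc : (![i, j] : Fin 2 → Fin M) ∘ ⇑(Equiv.swap (0 : Fin 2) 1) = ![j, i] := by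
    funext k
    fin_cases k <;> simp
  rw [hc, Equiv.Perm.sign_swap (by decide : (0 : Fin 2) ≠ 1)] at h
  rw [h]
  push_cast
  ring

lemma ext_decomp {ψ : W} (hψ : ψ ∈ exteriorPow 2 M) :
    ψ = ∑ i : Fin M, ∑ j : Fin M, ((1/2 : ℂ) * ψ ![i, j]) •
      wedge ![EuclideanSpace.single i (1 : ℂ), EuclideanSpace.single j (1 : ℂ)] := by
  refine PiLp.ext (fun x => ?_)
  have happ : (∑ i : Fin M, ∑ j : Fin M, ((1/2 : ℂ) * ψ ![i, j]) •
      wedge ![EuclideanSpace.single i (1 : ℂ), EuclideanSpace.single j (1 : ℂ)]) x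
      = ∑ i : Fin M, ∑ j : Fin M, ((1/2 : ℂ) * ψ ![i, j]) *
        wedge ![EuclideanSpace.single i (1 : ℂ), EuclideanSpace.single j (1 : ℂ)] x := by
    rw [WithLp.ofLp_sum, Finset.sum_apply]
    refine Finset.sum_congr rfl (fun i _ => ?_)
    rw [WithLp.ofLp_sum, Finset.sum_apply]
    rfl
  rw [happ]
  symm
  have hsummand : ∀ i j : Fin M, ((1/2 : ℂ) * ψ ![i, j]) *
      wedge ![EuclideanSpace.single i (1 : ℂ), EuclideanSpace.single j (1 : ℂ)] x
      = ((1/2 : ℂ) * ψ ![i, j]) * ((if x 0 = i then (1:ℂ) else 0) * (if x 1 = j then (1:ℂ) else 0))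
        - ((1/2 : ℂ) * ψ ![i, j]) * ((if x 0 = j then (1:ℂ) else 0) * (if x 1 = i then (1:ℂ) else 0)) := by
    intro i j
    rw [wedge_pair_apply]
    rw [EuclideanSpace.single_apply, EuclideanSpace.single_apply,
      EuclideanSpace.single_apply, EuclideanSpace.single_apply]
    ring
  calc ∑ i : Fin M, ∑ j : Fin M, ((1/2 : ℂ) * ψ ![i, j]) *
        wedge ![EuclideanSpace.single i (1 : ℂ), EuclideanSpace.single j (1 : ℂ)] x
      = ∑ i : Fin M, ∑ j : Fin M,
          (((1/2 : ℂ) * ψ ![i, j]) * ((if x 0 = i then (1:ℂ) else 0) * (if x 1 = j then (1:ℂ) else 0))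
          - ((1/2 : ℂ) * ψ ![i, j]) * ((if x 0 = j then (1:ℂ) else 0) * (if x 1 = i then (1:ℂ) else 0))) := by
        exact Finset.sum_congr rfl (fun i _ => Finset.sum_congr rfl (fun j _ => hsummand i j))
    _ = (1/2 : ℂ) * ψ ![x 0, x 1] - (1/2 : ℂ) * ψ ![x 1, x 0] := by
        simp [Finset.sum_sub_distrib, mul_ite, ite_mul, Finset.sum_ite_eq, Finset.sum_ite_eq']
    _ = ψ x := by
        rw [ext_antisym hψ (x 0) (x 1)]
        rw [show ψ x = ψ ![x 0, x 1] from by rw [← matrix_eta x]]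
        ring

lemma vanish_on_ext (h : W →ₗ[ℂ] ℂ)
    (hw : ∀ v w : V, h (wedge ![v, w]) = 0) :
    ∀ ψ ∈ exteriorPow 2 M, h ψ = 0 := by
  intro ψ hψ
  rw [ext_decomp hψ]
  rw [map_sum]
  refine Finset.sum_eq_zero (fun i _ => ?_)
  rw [map_sum]
  refine Finset.sum_eq_zero (fun j _ => ?_)
  rw [map_smul, hw, smul_zero]


open SlaterAux

end SlaterConc

section MainTheorem

open SlaterConc SlaterAux

/-- Every subspace `L ⊆ ⋀² ℂ^M` of codimension at most 2 is spanned by the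
decomposable 2-vectors it contains. -/
theorem codim_two_spanned_by_slaters (M : ℕ) (hM : 2 ≤ M)
    (L : Submodule ℂ (TensorPow 2 M)) (hL : L ≤ exteriorPow 2 M)
    (hcodim : Module.finrank ℂ (exteriorPow 2 M) ≤ Module.finrank ℂ L + 2) :
    Submodule.span ℂ {ψ : TensorPow 2 M | ψ ∈ L ∧ IsSlater ψ} = L := by
  classical
  set E := exteriorPow 2 M with hE
  set S := Submodule.span ℂ {ψ : TensorPow 2 M | ψ ∈ L ∧ IsSlater ψ} with hSdef
  have hSL : S ≤ L := Submodule.span_le.mpr (fun ψ hψ => hψ.1)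
  refine le_antisymm hSL (fun ω hω => ?_)
  by_contra hns
  obtain ⟨f, hfω, hfS⟩ := S.exists_dual_map_eq_bot_of_notMem hns inferInstance
  have hf0 : ∀ ψ ∈ S, f ψ = 0 := by
    intro ψ hψ
    have h1 : f ψ ∈ S.map f := Submodule.mem_map_of_mem hψ
    rw [hfS] at h1
    simpa using h1
  -- build the two functionals cutting out L inside E
  set L' : Submodule ℂ ↥E := L.comap E.subtype with hL'def
  have hmemL' : ∀ ψ : ↥E, ψ ∈ L' ↔ (ψ : TensorPow 2 M) ∈ L := by
    intro ψ; rw [hL'def, Submodule.mem_comap]; rfl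
  have hfr : Module.finrank ℂ L' = Module.finrank ℂ L :=
    (Submodule.comapSubtypeEquivOfLe hL).finrank_eq
  have hq := Submodule.finrank_quotient_add_finrank L'
  have hEfr : Module.finrank ℂ E = Module.finrank ℂ (exteriorPow 2 M) := rfl
  have hq2 : Module.finrank ℂ (↥E ⧸ L') ≤ 2 := by omega
  set k := Module.finrank ℂ (↥E ⧸ L') with hk
  set bQ := Module.finBasis ℂ (↥E ⧸ L') with hbQ
  set qf : Fin 2 → ((↥E ⧸ L') →ₗ[ℂ] ℂ) := fun i =>
    if h : (i : ℕ) < k then (Finsupp.lapply (⟨i, h⟩ : Fin k)).comp bQ.repr.toLinearMap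
    else 0 with hqf
  have key0 : ∀ q : ↥E ⧸ L', (∀ i : Fin 2, qf i q = 0) → q = 0 := by
    intro q hq0
    have hrepr : ∀ j : Fin k, bQ.repr q j = 0 := by
      intro j
      have hj2 : (j : ℕ) < 2 := lt_of_lt_of_le j.2 hq2
      have := hq0 ⟨j, hj2⟩
      rw [hqf] at this
      simp only [] at this
      rw [dif_pos (show ((⟨(j:ℕ), hj2⟩ : Fin 2) : ℕ) < k from j.2)] at this
      simpa using this
    have : bQ.repr q = 0 := Finsupp.ext hrepr
    simpa using congrArg bQ.repr.symm this
  set g : Fin 2 → (↥E →ₗ[ℂ] ℂ) := fun i => (qf i).comp L'.mkQ with hg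
  have crit : ∀ ψ : ↥E, ((ψ : TensorPow 2 M) ∈ L ↔ (g 0 ψ = 0 ∧ g 1 ψ = 0)) := by
    intro ψ
    rw [← hmemL' ψ]
    constructor
    · intro hmem
      have hz : L'.mkQ ψ = 0 := (Submodule.Quotient.mk_eq_zero L').mpr hmem
      constructor <;> · rw [hg]; simp only [LinearMap.comp_apply, hz, map_zero]
    · rintro ⟨h0, h1⟩
      have hz : L'.mkQ ψ = 0 := by
        apply key0
        intro i
        fin_cases i
        · exact h0
        · exact h1
      exact (Submodule.Quotient.mk_eq_zero L').mp hz
  obtain ⟨G1, hG1⟩ := LinearMap.exists_extend (g 0)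
  obtain ⟨G2, hG2⟩ := LinearMap.exists_extend (g 1)
  have hG1' : ∀ ψ : ↥E, G1 (ψ : TensorPow 2 M) = g 0 ψ := by
    intro ψ
    conv_rhs => rw [← hG1]
    rfl
  have hG2' : ∀ ψ : ↥E, G2 (ψ : TensorPow 2 M) = g 1 ψ := by
    intro ψ
    conv_rhs => rw [← hG2]
    rfl
  -- apply the main linear-algebra lemma
  have hyp : ∀ v w : EuclideanSpace ℂ (Fin M),
      Bform G1 v w = 0 → Bform G2 v w = 0 → Bform f v w = 0 := by
    intro v w h1 h2
    rw [Bform_apply] at h1 h2 ⊢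
    have hmem : wedge ![v, w] ∈ L := by
      have := (crit ⟨wedge ![v, w], wedge_mem v w⟩).mpr
      apply this
      constructor
      · rw [← hG1' ⟨wedge ![v, w], wedge_mem v w⟩]; exact h1
      · rw [← hG2' ⟨wedge ![v, w], wedge_mem v w⟩]; exact h2
    have hS : wedge ![v, w] ∈ S := by
      rw [hSdef]
      exact Submodule.subset_span ⟨hmem, ⟨![v, w], rfl⟩⟩
    exact hf0 _ hS
  obtain ⟨α, β, hαβ⟩ := mainLemma (Bform_alt G1) (Bform_alt G2) (Bform_alt f) hyp
  set h : TensorPow 2 M →ₗ[ℂ] ℂ := f - α • G1 - β • G2 with hhdef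
  have hwedge : ∀ v w : EuclideanSpace ℂ (Fin M), h (wedge ![v, w]) = 0 := by
    intro v w
    have h1 := hαβ v w
    rw [Bform_apply, Bform_apply, Bform_apply] at h1
    rw [hhdef]
    simp only [LinearMap.sub_apply, LinearMap.smul_apply, smul_eq_mul]
    linear_combination h1
  have hω0 := vanish_on_ext h hwedge ω (hL hω)
  rw [hhdef] at hω0
  simp only [LinearMap.sub_apply, LinearMap.smul_apply, smul_eq_mul] at hω0
  have hg1ω : G1 ω = 0 := by
    rw [show ω = ((⟨ω, hL hω⟩ : ↥E) : TensorPow 2 M) from rfl, hG1']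
    exact ((crit ⟨ω, hL hω⟩).mp hω).1
  have hg2ω : G2 ω = 0 := by
    rw [show ω = ((⟨ω, hL hω⟩ : ↥E) : TensorPow 2 M) from rfl, hG2']
    exact ((crit ⟨ω, hL hω⟩).mp hω).2
  apply hfω
  rw [hg1ω, hg2ω] at hω0
  linear_combination hω0

end MainTheorem
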